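/- Fix g̃ variables and degree bound d̃, and let N = Σ_{j=0}^{d̃} g̃^j. Let H be the N-dimensional real Hilbert space with orthonormal basis the words of length at most d̃ in letters a₁,…,a_{g̃}. Define shift operators S_j on H by S_j w = a_j w for words w of length ≤ d̃−1 and S_j w = 0 for words of length d̃, and set T_j = S_j + S_jᵀ. Then for every homogeneous free polynomial r = Σ_v r_v v of degree d̃, the vector r(T)·∅ equals Σ_v r_v v + h, where h is a linear combination of words of degree at most d̃−2; in particular if r(T) = 0 then r = 0. -/

import Mathlib

/-- The Hilbert space of the truncated Fock-space construction: functions on the words of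
length at most `dt` in `gt` letters (the words form an orthonormal basis). -/
def TruncWords (gt dt : ℕ) := {w : List (Fin gt) // w.length ≤ dt}

/-- The creation (shift) operator `S_j`: on basis vectors, `S_j e_w = e_{a_j w}` for
`|w| ≤ dt - 1` and `S_j e_w = 0` for `|w| = dt`. -/
def shiftS {gt dt : ℕ} (j : Fin gt) (f : TruncWords gt dt → ℝ) :
    TruncWords gt dt → ℝ := fun w =>
  match w with
  | ⟨[], _⟩ => 0
  | ⟨i :: rest, h⟩ =>
      if i = j then f ⟨rest, Nat.le_of_succ_le h⟩ else 0

/-- The transpose (annihilation) operator `S_jᵀ`: on basis vectors, `S_jᵀ e_w` is the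
vector whose `u`-coefficient is the `(a_j u)`-coefficient of `e_w` (when `|a_j u| ≤ dt`). -/
def shiftSt {gt dt : ℕ} (j : Fin gt) (f : TruncWords gt dt → ℝ) :
    TruncWords gt dt → ℝ := fun w =>
  if h : w.1.length + 1 ≤ dt then f ⟨j :: w.1, by simpa using h⟩ else 0

/-- The symmetric operator `T_j = S_j + S_jᵀ`. -/
def shiftT {gt dt : ℕ} (j : Fin gt) (f : TruncWords gt dt → ℝ) :
    TruncWords gt dt → ℝ :=
  shiftS j f + shiftSt j f

/-- Evaluation of a word `w = a_{i₁} ⋯ a_{i_m}` at the tuple `T`, as the composition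
`T_{i₁} ∘ ⋯ ∘ T_{i_m}` of the operators `T_j`. -/
def wordT {gt dt : ℕ} (w : List (Fin gt)) :
    (TruncWords gt dt → ℝ) → (TruncWords gt dt → ℝ) :=
  w.foldr (fun j acc => shiftT j ∘ acc) id

/-- The empty-word basis vector `∅`. -/
noncomputable def emptyVec (gt dt : ℕ) : TruncWords gt dt → ℝ := fun w =>
  if w.1 = [] then 1 else 0

lemma shiftT_apply' {gt dt : ℕ} (j : Fin gt) (f : TruncWords gt dt → ℝ)
    (u : {w : List (Fin gt) // w.length ≤ dt}) :
    shiftT j f u = shiftS j f u + shiftSt j f u := rfl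

/-- For a homogeneous free polynomial `r = ∑_v r_v v` of degree `dt` (coefficients `c`),
the vector `r(T) ∅` equals `∑_v r_v v + h` with `h` a combination of words of degree at
most `dt − 2`; in particular, if the operator `r(T)` is zero then `r = 0`. -/
lemma key {gt dt : ℕ} : ∀ (w : List (Fin gt)), w.length ≤ dt →
    ∃ h : TruncWords gt dt → ℝ, (∀ u, h u ≠ 0 → u.1.length + 2 ≤ w.length) ∧
      wordT w (emptyVec gt dt) = fun u => (if u.1 = w then (1:ℝ) else 0) + h u := by
  intro w
  induction w with
  | nil =>
    intro _
    refine ⟨0, fun u hu => absurd rfl hu, ?_⟩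
    funext u
    simp [wordT, emptyVec]
  | cons j w' ih =>
    intro hlen
    obtain ⟨h', hs', heq'⟩ := ih (Nat.le_of_succ_le hlen)
    have hw : wordT (j :: w') (emptyVec gt dt)
        = shiftT j (wordT w' (emptyVec gt dt)) := rfl
    refine ⟨fun u => shiftT j (wordT w' (emptyVec gt dt)) u
        - (if u.1 = j :: w' then 1 else 0), ?_, by funext u; rw [hw]; ring⟩
    intro u hu
    by_contra hc
    push_neg at hc
    apply hu
    rw [heq'] at *
    have hzero : ∀ (v : TruncWords gt dt), w'.length < v.1.length + 2 → h' v = 0 := by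
      intro v hv
      by_contra hne
      exact absurd (hs' v hne) (by omega)
    rcases u with ⟨l, hl⟩
    rcases l with _ | ⟨i, rest⟩
    · -- empty word case: w' must be []
      simp only [List.length_nil, List.length_cons] at hc
      have hw'nil : w' = [] := List.length_eq_zero_iff.mp (by omega)
      have hz1 : ∀ p, h' ⟨[j], p⟩ = 0 := fun p => hzero _ (by simp [hw'nil])
      subst hw'nil
      simp only [shiftT_apply', shiftS, shiftSt, hz1]
      split_ifs <;> simp_all
    · simp only [List.length_cons] at hc hl
      have hz1 : ∀ p, h' ⟨rest, p⟩ = 0 := fun p => hzero _ (by simp; omega)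
      have hz2 : ∀ p, h' ⟨j :: i :: rest, p⟩ = 0 := fun p => hzero _ (by simp; omega)
      have hne3 : (j :: i :: rest : List (Fin gt)) ≠ w' := by
        intro he
        have : w'.length = rest.length + 2 := by rw [← he]; simp
        omega
      simp only [shiftT_apply', shiftS, shiftSt, hz1, hz2]
      split_ifs <;> simp_all

theorem truncated_shift_faithful {gt dt : ℕ}
    (c : (List (Fin gt)) →₀ ℝ)
    (hhom : ∀ w ∈ c.support, w.length = dt) :
    (∃ h : TruncWords gt dt → ℝ,
      (∀ u : TruncWords gt dt, h u ≠ 0 → u.1.length + 2 ≤ dt) ∧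
      (c.sum fun w coeff => coeff • wordT w (emptyVec gt dt)) =
        (fun u => c u.1 + h u)) ∧
    ((∀ f : TruncWords gt dt → ℝ,
        (c.sum fun w coeff => coeff • wordT w f) = 0) → c = 0) := by
  classical
  -- pointwise value of the sum
  have hptw : ∀ u : TruncWords gt dt,
      (c.sum fun w coeff => coeff • wordT w (emptyVec gt dt)) u
        = ∑ w ∈ c.support, c w * (wordT w (emptyVec gt dt)) u := by
    intro u
    rw [Finsupp.sum, Finset.sum_apply]
    rfl
  obtain ⟨H, hH⟩ : ∃ H : List (Fin gt) → (TruncWords gt dt → ℝ),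
      ∀ w ∈ c.support,
        (∀ u : TruncWords gt dt, H w u ≠ 0 → u.1.length + 2 ≤ dt) ∧
        wordT w (emptyVec gt dt) = fun u => (if u.1 = w then (1:ℝ) else 0) + H w u := by
    have : ∀ w ∈ c.support, ∃ h : TruncWords gt dt → ℝ,
        (∀ u : TruncWords gt dt, h u ≠ 0 → u.1.length + 2 ≤ dt) ∧
        wordT w (emptyVec gt dt) = fun u => (if u.1 = w then (1:ℝ) else 0) + h u := by
      intro w hw
      obtain ⟨h, hs, he⟩ := key w (le_of_eq (hhom w hw))
      exact ⟨h, fun u hu => (hhom w hw) ▸ hs u hu, he⟩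
    choose H hH using fun w => this w
    exact ⟨fun w => if hw : w ∈ c.support then H w hw else 0,
      fun w hw => by simpa [hw] using hH w hw⟩
  -- the value of the sum at u
  have hval : ∀ u : TruncWords gt dt,
      (c.sum fun w coeff => coeff • wordT w (emptyVec gt dt)) u
        = c u.1 + ∑ w ∈ c.support, c w * H w u := by
    intro u
    rw [hptw u]
    have : ∀ w ∈ c.support, c w * (wordT w (emptyVec gt dt)) u
        = (if u.1 = w then c w else 0) + c w * H w u := by
      intro w hw
      rw [(hH w hw).2]
      simp only
      split_ifs <;> ring
    rw [Finset.sum_congr rfl this, Finset.sum_add_distrib]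
    congr 1
    rw [Finset.sum_ite_eq c.support u.1 (fun w => c w)]
    split_ifs with h
    · rfl
    · exact (Finsupp.notMem_support_iff.mp h).symm
  have main : (∀ u : TruncWords gt dt,
      (∑ w ∈ c.support, c w * H w u ≠ 0) → u.1.length + 2 ≤ dt) := by
    intro u hu
    by_contra hc
    apply hu
    apply Finset.sum_eq_zero
    intro w hw
    have : H w u = 0 := by
      by_contra hne
      exact hc ((hH w hw).1 u hne)
    simp [this]
  constructor
  · refine ⟨fun u => ∑ w ∈ c.support, c w * H w u, main, ?_⟩
    funext u
    exact hval u
  · intro hf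
    ext w
    simp only [Finsupp.coe_zero, Pi.zero_apply]
    by_cases hw : w ∈ c.support
    · have hwd : w.length = dt := hhom w hw
      set u : TruncWords gt dt := ⟨w, le_of_eq hwd⟩
      have h0 := congrFun (hf (emptyVec gt dt)) u
      rw [hval u] at h0
      simp only [Pi.zero_apply] at h0
      have hH0 : ∑ v ∈ c.support, c v * H v u = 0 := by
        by_contra hne
        have := main u hne
        simp only [u, hwd] at this
        omega
      rw [hH0] at h0
      simpa using h0
    · exact Finsupp.notMem_support_iff.mp hw
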